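/- Let Λ be the operator on formal power series H(z;u) ∈ ℚ[u][[z]] defined by ΛH(z;u) = (1+u)(1+zu)·(H(z;u)−H(z;0))/u. Writing w = 1+zu, for every integer p ≥ 1 one has: Λ(1/wᵖ) = (1−z)/w^{p−1} − z·Σ_{a=0}^{p−2} 1/wᵃ − w; Λ(1) = 0; and Λ(wᵖ) = (z−1)w + z·Σ_{a=2}^{p} wᵃ + w^{p+1}. -/

import Mathlib

open Polynomial PowerSeries

/-- w = 1 + zu, as a power series in z with coefficients in ℚ[u]. -/
noncomputable def w : PowerSeries (Polynomial ℚ) :=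
  1 + PowerSeries.X * PowerSeries.C Polynomial.X

/-- The operator Λ : H(z;u) ↦ (1+u)(1+zu)(H(z;u) − H(z;0))/u, acting on ℚ[u][[z]].
Division by u is performed coefficientwise via exact polynomial division. -/
noncomputable def Lam (H : PowerSeries (Polynomial ℚ)) : PowerSeries (Polynomial ℚ) :=
  PowerSeries.C (1 + Polynomial.X) * w *
    PowerSeries.mk fun n =>
      (PowerSeries.coeff n H
        - Polynomial.C ((PowerSeries.coeff n H).eval 0)) /ₘ Polynomial.X

/-- The "evaluate u at 0" ring hom on coefficients. -/
noncomputable def phi : Polynomial ℚ →+* Polynomial ℚ :=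
  (Polynomial.C).comp (Polynomial.evalRingHom 0)

lemma key (H : PowerSeries (Polynomial ℚ)) :
    PowerSeries.C Polynomial.X * Lam H =
      PowerSeries.C (1 + Polynomial.X) * w * (H - PowerSeries.map phi H) := by
  unfold Lam
  rw [mul_left_comm]
  congr 1
  ext n : 1
  rw [PowerSeries.coeff_C_mul, PowerSeries.coeff_mk, map_sub, PowerSeries.coeff_map]
  set q : Polynomial ℚ := PowerSeries.coeff n H with hq
  have hmonic : (Polynomial.X : Polynomial ℚ).Monic := Polynomial.monic_X
  have h1 : (q - Polynomial.C (q.eval 0)) %ₘ Polynomial.X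
      + Polynomial.X * ((q - Polynomial.C (q.eval 0)) /ₘ Polynomial.X)
      = q - Polynomial.C (q.eval 0) := Polynomial.modByMonic_add_div _ _
  rw [Polynomial.modByMonic_X] at h1
  simp only [Polynomial.eval_sub, Polynomial.eval_C, sub_self, map_zero, zero_add] at h1
  rw [h1]
  simp [phi]

lemma hU : (PowerSeries.C (R := Polynomial ℚ) Polynomial.X) ≠ 0 := by
  intro h
  have := congrArg (PowerSeries.constantCoeff) h
  simp at this

lemma map_phi_w : PowerSeries.map phi w = 1 := by
  unfold w
  simp [phi, PowerSeries.map_C]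

lemma sum_Icc_pow (x : PowerSeries (Polynomial ℚ)) (p : ℕ) (hp : 1 ≤ p) :
    ∑ a ∈ Finset.Icc 2 p, x ^ a
      = ∑ a ∈ Finset.range p, x ^ a + x ^ p - 1 - x := by
  induction p with
  | zero => omega
  | succ n ih =>
    rcases Nat.lt_or_ge n 1 with h | h
    · interval_cases n
      simp
    · rw [Finset.sum_Icc_succ_top (by omega), ih h, Finset.sum_range_succ]
      ring

/-- The elementary action of Λ on powers of w = 1+zu: for p ≥ 1,
Λ(1/wᵖ) = (1−z)/w^{p−1} − z·Σ_{a=0}^{p−2} 1/wᵃ − w,  Λ(1) = 0, and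
Λ(wᵖ) = (z−1)w + z·Σ_{a=2}^{p} wᵃ + w^{p+1}.  Here `wi` is the inverse series 1/w. -/
theorem Lam_elementary (p : ℕ) (hp : 1 ≤ p)
    (wi : PowerSeries (Polynomial ℚ)) (hwi : w * wi = 1) :
    Lam (wi^p) = (1 - PowerSeries.X) * wi^(p-1)
        - PowerSeries.X * (∑ a ∈ Finset.range (p-1), wi^a) - w
    ∧ Lam 1 = 0
    ∧ Lam (w^p) = (PowerSeries.X - 1) * w
        + PowerSeries.X * (∑ a ∈ Finset.Icc 2 p, w^a) + w^(p+1) := by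
  have hmw : PowerSeries.map phi w = 1 := map_phi_w
  have hmwi : PowerSeries.map phi wi = 1 := by
    have h := congrArg (PowerSeries.map phi) hwi
    rw [map_mul, hmw, one_mul, map_one] at h
    exact h
  have hC : PowerSeries.C (R := Polynomial ℚ) (1 + Polynomial.X)
      = 1 + PowerSeries.C Polynomial.X := by
    simp [map_add]
  have hw : w = 1 + PowerSeries.X * PowerSeries.C Polynomial.X := rfl
  obtain ⟨q, rfl⟩ : ∃ q, p = q + 1 := ⟨p - 1, (Nat.succ_pred_eq_of_pos hp).symm⟩
  simp only [Nat.add_sub_cancel]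
  refine ⟨?_, ?_, ?_⟩
  · apply mul_left_cancel₀ hU
    rw [key, map_pow, hmwi, one_pow, hC]
    have hgeom : (∑ a ∈ Finset.range q, wi ^ a) * (wi - 1) = wi ^ q - 1 := geom_sum_mul wi q
    linear_combination ((1 + PowerSeries.C Polynomial.X) * wi ^ q
        + ∑ a ∈ Finset.range q, wi ^ a) * hwi
      - w * hgeom
      - (wi ^ q + ∑ a ∈ Finset.range q, wi ^ a) * hw
  · apply mul_left_cancel₀ hU
    rw [key, map_one]
    simp
  · apply mul_left_cancel₀ hU
    rw [key, map_pow, hmw, one_pow, hC, sum_Icc_pow w (q + 1) (by omega)]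
    have hgeom : (∑ a ∈ Finset.range (q + 1), w ^ a) * (w - 1) = w ^ (q + 1) - 1 :=
      geom_sum_mul w (q + 1)
    linear_combination (-1 : PowerSeries (Polynomial ℚ)) * hgeom
      + (∑ a ∈ Finset.range (q + 1), w ^ a + w ^ (q + 1) - 1) * hw
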